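/- Let a < b be real numbers and let x : [a,b] → ℝⁿ be absolutely continuous. Suppose there exist constants Q, G ≥ 0 such that |ẋ(t)| ≤ Q|x(t)| + G|x(a)| for almost every t ∈ [a,b]. Suppose furthermore that (G+Q)(b−a)·exp(Q(b−a)) < 1. Then for every t ∈ [a,b]: |x(t) − x(a)| ≤ [(G+Q)(b−a)·exp(Q(b−a)) / (1 − (G+Q)(b−a)·exp(Q(b−a)))] · |x(t)|. -/

import Mathlib

open MeasureTheory Set

private lemma gb_le (Q c y : ℝ) (hQ : 0 ≤ Q) (hc : 0 ≤ c) (hy : 0 ≤ y) :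
    gronwallBound 0 Q c y ≤ c * y * Real.exp (Q * y) := by
  rcases eq_or_lt_of_le hQ with h0 | h0
  · rw [← h0, gronwallBound_K0]
    simp [Real.exp_zero]
  · rw [gronwallBound_of_K_ne_0 (ne_of_gt h0)]
    have key : Real.exp (Q * y) - 1 ≤ Q * y * Real.exp (Q * y) := by
      have h1 : -(Q*y) + 1 ≤ Real.exp (-(Q*y)) := Real.add_one_le_exp _
      have h2 : (0:ℝ) < Real.exp (Q * y) := Real.exp_pos _
      have h3 : Real.exp (-(Q*y)) * Real.exp (Q*y) = 1 := by
        rw [← Real.exp_add]; simp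
      nlinarith
    have hcQ : 0 ≤ c / Q := div_nonneg hc h0.le
    have := mul_le_mul_of_nonneg_left key hcQ
    have hQne : Q ≠ 0 := ne_of_gt h0
    calc 0 * Real.exp (Q * y) + c / Q * (Real.exp (Q * y) - 1)
        ≤ c / Q * (Q * y * Real.exp (Q * y)) := by linarith
      _ = c * y * Real.exp (Q * y) := by field_simp

/-- **Lemma 2.3.** Let `a < b` and let `x : [a,b] → ℝⁿ` be absolutely continuous (i.e.
differentiable a.e. with locally integrable derivative `x'` and
`x t = x a + ∫_a^t x' s ds` on `[a,b]`).  If `‖x' t‖ ≤ Q ‖x t‖ + G ‖x a‖` a.e. on `[a,b]`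
with `Q, G ≥ 0` and `(G+Q)(b-a) exp(Q(b-a)) < 1`, then for all `t ∈ [a,b]`,
`‖x t - x a‖ ≤ (G+Q)(b-a) exp(Q(b-a)) / (1 - (G+Q)(b-a) exp(Q(b-a))) * ‖x t‖`. -/
theorem lemma_2_3 (n : ℕ) (a b : ℝ) (hab : a < b)
    (x x' : ℝ → EuclideanSpace ℝ (Fin n))
    (hderiv : ∀ᵐ t ∂(volume.restrict (Icc a b)), HasDerivAt x (x' t) t)
    (hint : IntervalIntegrable x' volume a b)
    (hAC : ∀ t ∈ Icc a b, x t = x a + ∫ s in a..t, x' s)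
    (Q G : ℝ) (hQ : 0 ≤ Q) (hG : 0 ≤ G)
    (hbound : ∀ᵐ t ∂(volume.restrict (Icc a b)), ‖x' t‖ ≤ Q * ‖x t‖ + G * ‖x a‖)
    (hsmall : (G + Q) * (b - a) * Real.exp (Q * (b - a)) < 1) :
    ∀ t ∈ Icc a b,
      ‖x t - x a‖ ≤ (G + Q) * (b - a) * Real.exp (Q * (b - a)) /
        (1 - (G + Q) * (b - a) * Real.exp (Q * (b - a))) * ‖x t‖ := by
  have hab' : a ≤ b := hab.le
  set C := (G + Q) * (b - a) * Real.exp (Q * (b - a)) with hCdef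
  have hba : (0:ℝ) ≤ b - a := by linarith
  have hC0 : 0 ≤ C := mul_nonneg (mul_nonneg (by linarith) hba) (Real.exp_pos _).le
  have hC1 : C < 1 := hsmall
  set c := (Q + G) * ‖x a‖ with hcdef
  have hc0 : 0 ≤ c := by positivity
  -- the primitive of ‖x'‖
  set φ : ℝ → ℝ := fun t => ∫ s in a..t, ‖x' s‖ with hφdef
  have hx'n : IntervalIntegrable (fun s => ‖x' s‖) volume a b := hint.norm
  have hφcont : ContinuousOn φ (Icc a b) := by
    have : IntegrableOn (fun s => ‖x' s‖) (Icc a b) volume := by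
      rw [integrableOn_Icc_iff_integrableOn_Ioc]
      have := hx'n.def'
      rwa [uIoc_of_le hab'] at this
    simpa [hφdef, uIcc_of_le hab'] using
      intervalIntegral.continuousOn_primitive_interval
        (by rwa [uIcc_of_le hab'] : IntegrableOn (fun s => ‖x' s‖) (uIcc a b) volume)
  have hφ0 : ∀ t ∈ Icc a b, 0 ≤ φ t := by
    intro t ht
    exact intervalIntegral.integral_nonneg ht.1 (fun s _ => norm_nonneg _)
  -- ‖x t - x a‖ ≤ φ t
  have hxφ : ∀ t ∈ Icc a b, ‖x t - x a‖ ≤ φ t := by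
    intro t ht
    have := hAC t ht
    have hxt : x t - x a = ∫ s in a..t, x' s := by rw [this]; abel
    rw [hxt]
    exact intervalIntegral.norm_integral_le_integral_norm ht.1
  -- clamp
  set proj : ℝ → ℝ := fun s => max a (min s b) with hprojdef
  have hprojmem : ∀ s, proj s ∈ Icc a b := fun s =>
    ⟨le_max_left _ _, max_le (le_of_lt hab) (min_le_right _ _)⟩
  have hprojeq : ∀ s ∈ Icc a b, proj s = s := by
    intro s hs
    simp [hprojdef, min_eq_left hs.2, max_eq_right hs.1]
  set g : ℝ → ℝ := fun s => Q * φ (proj s) + c with hgdef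
  have hgcont : Continuous g := by
    have : Continuous (φ ∘ proj) :=
      hφcont.comp_continuous (by fun_prop) hprojmem
    exact (continuous_const.mul this).add continuous_const
  have hg0 : ∀ s, 0 ≤ g s :=
    fun s => add_nonneg (mul_nonneg hQ (hφ0 _ (hprojmem s))) hc0
  set ψ : ℝ → ℝ := fun t => ∫ s in a..t, g s with hψdef
  have hψderiv : ∀ t, HasDerivAt ψ (g t) t := fun t =>
    intervalIntegral.integral_hasDerivAt_right (hgcont.intervalIntegrable a t)
      hgcont.aestronglyMeasurable.stronglyMeasurableAtFilter hgcont.continuousAt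
  -- φ ≤ ψ on [a,b]
  have hφψ : ∀ t ∈ Icc a b, φ t ≤ ψ t := by
    intro t ht
    apply intervalIntegral.integral_mono_ae_restrict ht.1
      (hx'n.mono_set (by rw [uIcc_of_le hab', uIcc_of_le ht.1]; exact Icc_subset_Icc_right ht.2))
      (hgcont.intervalIntegrable a t)
    have hsub : Icc a t ⊆ Icc a b := Icc_subset_Icc_right ht.2
    have hb1 : ∀ᵐ s ∂(volume.restrict (Icc a t)), ‖x' s‖ ≤ Q * ‖x s‖ + G * ‖x a‖ :=
      ae_restrict_of_ae_restrict_of_subset hsub hbound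
    have hb2 : ∀ᵐ s ∂(volume.restrict (Icc a t)), s ∈ Icc a t :=
      ae_restrict_mem measurableSet_Icc
    filter_upwards [hb1, hb2] with s hs1 hs2
    have hsab : s ∈ Icc a b := hsub hs2
    have h1 : ‖x s‖ ≤ ‖x s - x a‖ + ‖x a‖ := by have := norm_sub_norm_le (x s) (x a); linarith [abs_le.1 (abs_norm_sub_norm_le (x s) (x a))]
    have h2 : ‖x s - x a‖ ≤ φ s := hxφ s hsab
    have h3 : g s = Q * φ s + c := by rw [hgdef]; simp [hprojeq s hsab]
    rw [h3, hcdef]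
    nlinarith
  have hψ0 : ∀ t ∈ Icc a b, 0 ≤ ψ t := fun t ht => le_trans (hφ0 t ht) (hφψ t ht)
  -- Gronwall for ψ
  have hgr : ∀ t ∈ Icc a b, ‖ψ t‖ ≤ gronwallBound 0 Q c (t - a) := by
    apply norm_le_gronwallBound_of_norm_deriv_right_le
    · exact fun t _ => (hψderiv t).continuousAt.continuousWithinAt
    · exact fun t _ => (hψderiv t).hasDerivWithinAt
    · simp [hψdef]
    · intro t ht
      have htab : t ∈ Icc a b := ⟨ht.1, ht.2.le⟩
      rw [Real.norm_of_nonneg (hg0 t), Real.norm_of_nonneg (hψ0 t htab)]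
      have h3 : g t = Q * φ t + c := by rw [hgdef]; simp [hprojeq t htab]
      rw [h3]
      have := hφψ t htab
      nlinarith
  -- key estimate
  have key : ∀ t ∈ Icc a b, ‖x t - x a‖ ≤ C * ‖x a‖ := by
    intro t ht
    have h1 : ‖x t - x a‖ ≤ ψ t := le_trans (hxφ t ht) (hφψ t ht)
    have h2 : ψ t ≤ gronwallBound 0 Q c (t - a) := by
      have := hgr t ht
      rwa [Real.norm_of_nonneg (hψ0 t ht)] at this
    have h3 : gronwallBound 0 Q c (t - a) ≤ c * (t - a) * Real.exp (Q * (t - a)) :=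
      gb_le Q c (t - a) hQ hc0 (by linarith [ht.1])
    have h4 : c * (t - a) * Real.exp (Q * (t - a)) ≤ c * (b - a) * Real.exp (Q * (b - a)) := by
      have hta : 0 ≤ t - a := by linarith [ht.1]
      have htb : t - a ≤ b - a := by linarith [ht.2]
      have he : Real.exp (Q * (t - a)) ≤ Real.exp (Q * (b - a)) :=
        Real.exp_le_exp.2 (by nlinarith)
      calc c * (t - a) * Real.exp (Q * (t - a)) ≤ c * (b - a) * Real.exp (Q * (t - a)) := by
            apply mul_le_mul_of_nonneg_right _ (Real.exp_pos _).le
            exact mul_le_mul_of_nonneg_left htb hc0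
        _ ≤ c * (b - a) * Real.exp (Q * (b - a)) := by
            apply mul_le_mul_of_nonneg_left he (mul_nonneg hc0 hba)
    have h5 : c * (b - a) * Real.exp (Q * (b - a)) = C * ‖x a‖ := by
      rw [hcdef, hCdef]; ring
    linarith
  -- final algebra
  intro t ht
  have hk := key t ht
  have h1 : ‖x a‖ ≤ ‖x t‖ + ‖x t - x a‖ := by
    have := norm_sub_norm_le (x t) (x a)
    linarith [abs_le.1 (abs_norm_sub_norm_le (x t) (x a))]
  have h2 : (1 - C) * ‖x a‖ ≤ ‖x t‖ := by nlinarith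
  have h1C : 0 < 1 - C := by linarith
  have h3 : ‖x a‖ ≤ ‖x t‖ / (1 - C) := (le_div_iff₀ h1C).2 (by linarith [h2, mul_comm (1-C) ‖x a‖])
  calc ‖x t - x a‖ ≤ C * ‖x a‖ := hk
    _ ≤ C * (‖x t‖ / (1 - C)) := mul_le_mul_of_nonneg_left h3 hC0
    _ = C / (1 - C) * ‖x t‖ := by ring
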